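/- For the Möbius structure P₁₁ = -a - 2a²x², P₁₂ = 0, P₂₂ = a + 2a²x² (a a nonzero constant) on the flat plane ℝ²: Y = 8a²x dy, U has U^a∂ₐ such that φ = 4a², ρ = 64a⁴x², μ = 0, V = -32a⁴x dy, and hence UₐV^a = 0 and k = 0, so the non-generic obstruction k + fμ vanishes. -/

import Mathlib

noncomputable def pd1 (f : ℝ → ℝ → ℝ) (x y : ℝ) : ℝ := deriv (fun t => f t y) x
noncomputable def pd2 (f : ℝ → ℝ → ℝ) (x y : ℝ) : ℝ := deriv (fun t => f x t) y

/-- for the Möbius structure P₁₁ = -a - 2a²x², P₁₂ = 0,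
P₂₂ = a + 2a²x² (a ≠ 0) on the flat plane: Y = 8a²x dy, φ = 4a², ρ = 64a⁴x²,
μ = 0, V = -32a⁴x dy, hence UₐV^a = 0 and k = 0, so the non-generic obstruction
k + fμ vanishes (for any f). -/
theorem stmt14
    (a : ℝ) (ha : a ≠ 0)
    (P11 P12 P22 Y1 Y2 U1 U2 V1 V2 μ φ ρ k : ℝ → ℝ → ℝ)
    (hP11 : P11 = fun x _ => -a - 2 * a ^ 2 * x ^ 2)
    (hP12 : P12 = fun _ _ => 0)
    (hP22 : P22 = fun x _ => a + 2 * a ^ 2 * x ^ 2)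
    (hY1 : ∀ x y, Y1 x y = 2 * (pd1 P12 x y - pd2 P11 x y))
    (hY2 : ∀ x y, Y2 x y = 2 * (pd1 P22 x y - pd2 P12 x y))
    (hU1 : ∀ x y, U1 x y = Y2 x y) (hU2 : ∀ x y, U2 x y = -Y1 x y)
    (hρ : ∀ x y, ρ x y = Y1 x y ^ 2 + Y2 x y ^ 2)
    (hμ : ∀ x y, μ x y = (pd1 Y1 x y + pd2 Y2 x y) / 2)
    (hφ : ∀ x y, φ x y = (pd1 U1 x y + pd2 U2 x y) / 2)
    (hV1 : ∀ x y, V1 x y = U1 x y * pd1 Y1 x y + U2 x y * pd2 Y1 x y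
      + μ x y * U1 x y - 3 * φ x y * Y1 x y)
    (hV2 : ∀ x y, V2 x y = U1 x y * pd1 Y2 x y + U2 x y * pd2 Y2 x y
      + μ x y * U2 x y - 3 * φ x y * Y2 x y)
    (hk : ∀ x y, k x y =
      (P11 x y * U1 x y * Y1 x y + P12 x y * U1 x y * Y2 x y
        + P12 x y * U2 x y * Y1 x y + P22 x y * U2 x y * Y2 x y)
      - (U1 x y * pd1 μ x y + U2 x y * pd2 μ x y) + 3 * φ x y * μ x y) :
    ∀ x y : ℝ,
      Y1 x y = 0 ∧ Y2 x y = 8 * a ^ 2 * x ∧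
      φ x y = 4 * a ^ 2 ∧ ρ x y = 64 * a ^ 4 * x ^ 2 ∧ μ x y = 0 ∧
      V1 x y = 0 ∧ V2 x y = -32 * a ^ 4 * x ∧
      U1 x y * V1 x y + U2 x y * V2 x y = 0 ∧ k x y = 0 ∧
      (∀ f : ℝ, k x y + f * μ x y = 0) := by
  have hY1f : Y1 = fun _ _ => (0:ℝ) := by
    funext x y
    simp [hY1, pd1, pd2, hP11, hP12]
  have hY2f : Y2 = fun x _ => 8 * a ^ 2 * x := by
    funext x y
    have h : deriv (fun t : ℝ => a + 2 * a ^ 2 * t ^ 2) x = 4 * a ^ 2 * x := by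
      have : HasDerivAt (fun t : ℝ => a + 2 * a ^ 2 * t ^ 2) (4 * a ^ 2 * x) x := by
        have := ((hasDerivAt_pow 2 x).const_mul (2 * a ^ 2)).const_add a
        exact this.congr_deriv (by norm_num; ring)
      exact this.deriv
    simp [hY2, pd1, pd2, hP22, hP12, h]; ring
  have hU1f : U1 = fun x _ => 8 * a ^ 2 * x := by
    funext x y; rw [hU1, hY2f]
  have hU2f : U2 = fun _ _ => (0:ℝ) := by
    funext x y; rw [hU2, hY1f]; simp
  have hμf : μ = fun _ _ => (0:ℝ) := by
    funext x y
    simp [hμ, hY1f, hY2f, pd1, pd2]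
  have hφf : φ = fun _ _ => 4 * a ^ 2 := by
    funext x y
    have h : deriv (fun t : ℝ => 8 * a ^ 2 * t) x = 8 * a ^ 2 := by
      simpa using ((hasDerivAt_id x).const_mul (8 * a ^ 2)).deriv
    simp [hφ, hU1f, hU2f, pd1, pd2, h]; ring
  have hdY2 : ∀ x y : ℝ, pd1 Y2 x y = 8 * a ^ 2 := by
    intro x y
    have h : deriv (fun t : ℝ => 8 * a ^ 2 * t) x = 8 * a ^ 2 := by
      simpa using ((hasDerivAt_id x).const_mul (8 * a ^ 2)).deriv
    simp [hY2f, pd1, h]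
  intro x y
  refine ⟨by simp [hY1f], by simp [hY2f], by simp [hφf], ?_, by simp [hμf], ?_, ?_, ?_, ?_, ?_⟩
  · rw [hρ]; simp [hY1f, hY2f]; ring
  · rw [hV1]; simp [hY1f, hU2f, hμf, pd1, pd2]
  · rw [hV2, hdY2]; simp [hY1f, hY2f, hU1f, hU2f, hμf, hφf, pd1, pd2]; ring
  · rw [hV1, hV2, hdY2]; simp [hY1f, hY2f, hU1f, hU2f, hμf, hφf, pd1, pd2]
  · rw [hk]; simp [hY1f, hY2f, hU1f, hU2f, hμf, hφf, hP12, pd1, pd2]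
  · intro f; rw [hk]; simp [hY1f, hY2f, hU1f, hU2f, hμf, hφf, hP12, pd1, pd2]
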